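/- arXiv:2512.02570 — 5 statements merged into one kernel-verified Lean document; each statement's English description precedes it below -/
import Mathlib

section
/- If k ∈ Ξ_min, then there exist non-negative integers (r_σ)_{σ∈I} such that (p^f − 1)·k = Σ_{σ∈I} r_σ·h_σ. (This expresses that the minimal cone is contained in the non-negative rational cone spanned by the partial Hasse invariant weight vectors, in the integral form used in the paper: N·k lies in the non-negative integral span of the h_σ, where N = p^f − 1.) -/
open scoped BigOperators

/-- The index set `I = (ℤ/fℤ) × {1,…,e}` of embeddings, with the second factor
0-indexed: `(i, j) : Idx e f` corresponds to the pair `(i, j+1)` of the paper. -/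
abbrev Idx (e f : ℕ) := ZMod f × Fin e

/-- `ν_σ = p` if `σ = (i,1)` (i.e. the 0-indexed second component is `0`),
and `ν_σ = 1` otherwise. -/
def nu (p e f : ℕ) (σ : Idx e f) : ℤ := if (σ.2 : ℕ) = 0 then (p : ℤ) else 1

/-- The cyclic permutation `φ` of `I`: `φ(i,j) = (i,j+1)` for `j < e` and
`φ(i,e) = (i+1,1)` (in the paper's 1-indexed notation). -/
def phi (e f : ℕ) (σ : Idx e f) : Idx e f :=
  if h : (σ.2 : ℕ) + 1 < e then (σ.1, ⟨(σ.2 : ℕ) + 1, h⟩)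
  else (σ.1 + 1, ⟨0, σ.2.pos⟩)

/-- The inverse `φ⁻¹` of the cyclic permutation `φ`, given by its explicit
formula: `φ⁻¹(i,j) = (i,j-1)` for `j > 1` and `φ⁻¹(i,1) = (i-1,e)`
(in the paper's 1-indexed notation). -/
def phiInv (e f : ℕ) (σ : Idx e f) : Idx e f :=
  if (σ.2 : ℕ) = 0 then (σ.1 - 1, ⟨e - 1, Nat.sub_lt σ.2.pos one_pos⟩)
  else (σ.1, ⟨(σ.2 : ℕ) - 1, lt_of_le_of_lt (Nat.sub_le _ 1) σ.2.isLt⟩)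

/-- The partial Hasse invariant weight vector `h_σ = ν_σ·𝐞_{φ⁻¹(σ)} − 𝐞_σ ∈ ℤ^I`. -/
def hvec (p e f : ℕ) (σ : Idx e f) : Idx e f → ℤ :=
  fun ρ => nu p e f σ * (if ρ = phiInv e f σ then 1 else 0) - (if ρ = σ then 1 else 0)

/-- The minimal cone `Ξ_min = { k ∈ ℤ^I : ν_σ·k_σ ≥ k_{φ⁻¹(σ)} for all σ ∈ I }`. -/
def XiMin (p e f : ℕ) : Set (Idx e f → ℤ) :=
  {k | ∀ σ : Idx e f, k (phiInv e f σ) ≤ nu p e f σ * k σ}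

/-- Auxiliary coefficient: `cfn ρ σ` is the product of the `ν`'s along the piece of
the `φ`-cycle from `ρ` to `σ`. -/
def cfn (p e f : ℕ) (ρ σ : Idx e f) : ℤ :=
  (p : ℤ) ^ ((σ.1 - ρ.1 - ((if (σ.2 : ℕ) < (ρ.2 : ℕ) then 1 else 0 : ℕ) : ZMod f)).val
      + (if (σ.2 : ℕ) < (ρ.2 : ℕ) then 1 else 0))

lemma phiInv_phi (e f : ℕ) (ρ : Idx e f) : phiInv e f (phi e f ρ) = ρ := by
  obtain ⟨i, j⟩ := ρ
  by_cases h : (j : ℕ) + 1 < e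
  · simp [phi, phiInv, h]
  · have hj : (j : ℕ) = e - 1 := by have := j.isLt; omega
    simp [phi, phiInv, h]
    exact Fin.ext (by show e - 1 = (j : ℕ); omega)

lemma phi_phiInv (e f : ℕ) (σ : Idx e f) : phi e f (phiInv e f σ) = σ := by
  obtain ⟨i, j⟩ := σ
  by_cases h : (j : ℕ) = 0
  · have hlt : ¬ ((e - 1 : ℕ) + 1 < e) := by omega
    simp [phi, phiInv, h, hlt]
    exact Fin.ext (by show (0 : ℕ) = (j : ℕ); omega)
  · have h1 : (j : ℕ) - 1 + 1 < e := by have := j.isLt; omega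
    simp [phi, phiInv, h, h1]
    exact Fin.ext (by show (j : ℕ) - 1 + 1 = (j : ℕ); omega)

lemma eq_phiInv_iff (e f : ℕ) (ρ σ : Idx e f) :
    ρ = phiInv e f σ ↔ σ = phi e f ρ := by
  constructor
  · rintro rfl; rw [phi_phiInv]
  · rintro rfl; rw [phiInv_phi]

lemma pval (f : ℕ) [NeZero f] (p : ℕ) (x : ZMod f) :
    (p : ℤ) ^ ((x - 1).val + 1)
      = (p : ℤ) ^ x.val + ((p : ℤ) ^ f - 1) * (if x = 0 then 1 else 0) := by
  by_cases h : x = 0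
  · subst h
    obtain ⟨n, rfl⟩ := Nat.exists_eq_succ_of_ne_zero (NeZero.ne f)
    simp only [if_pos rfl, zero_sub, ZMod.val_neg_one, ZMod.val_zero, pow_zero, if_true,
      eq_self_iff_true, mul_one]
    rw [pow_succ]
    ring
  · have hv : x.val ≠ 0 := fun hx => h ((ZMod.val_eq_zero x).1 hx)
    have h1 : 1 ≤ x.val := Nat.one_le_iff_ne_zero.2 hv
    have hx1 : x - 1 = ((x.val - 1 : ℕ) : ZMod f) := by
      rw [Nat.cast_sub h1, Nat.cast_one, ZMod.natCast_val, ZMod.cast_id]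
    have hlt : x.val - 1 < f := lt_of_le_of_lt (Nat.sub_le _ _) (ZMod.val_lt x)
    rw [hx1, ZMod.val_cast_of_lt hlt, if_neg h]
    have h2 : x.val - 1 + 1 = x.val := by omega
    rw [h2]; ring

lemma key (p e f : ℕ) [NeZero f] (ρ σ : Idx e f) :
    nu p e f (phi e f ρ) * cfn p e f (phi e f ρ) σ
      = cfn p e f ρ σ + ((p : ℤ) ^ f - 1) * (if σ = ρ then 1 else 0) := by
  obtain ⟨i, j⟩ := ρ
  obtain ⟨i', j'⟩ := σ
  by_cases h : (j : ℕ) + 1 < e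
  · simp only [phi, h, dif_pos, nu, cfn]
    norm_num
    rcases lt_trichotomy (j' : ℕ) (j : ℕ) with hc | hc | hc
    · have h1 : (j' : ℕ) < (j : ℕ) + 1 := by omega
      have hne : j' ≠ j := fun hh => by omega
      simp [h1, hne, show j' < j from hc, show j' ≤ j from le_of_lt (show j' < j from hc)]
    · have hcc : j' = j := Fin.ext hc
      simp only [hcc, lt_irrefl, if_neg, not_false_iff, lt_add_iff_pos_right, zero_lt_one,
        if_pos, Nat.cast_zero, sub_zero, add_zero, Nat.cast_one, le_refl, if_true]
      rw [pval f p (i' - i)]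
      by_cases hii : i' = i
      · simp [hii, sub_self]
      · simp [sub_eq_zero, hii]
    · have h1 : ¬ ((j' : ℕ) < (j : ℕ) + 1) := by omega
      have h2 : ¬ (j' < j) := by omega
      have hne : j' ≠ j := fun hh => by rw [hh] at hc; exact lt_irrefl _ hc
      simp [h1, h2, hne, show ¬ (j' ≤ j) by omega]
  · have hj : (j : ℕ) = e - 1 := by have := j.isLt; omega
    simp only [phi, h, dif_neg, not_false_iff, nu, cfn]
    norm_num
    have hrw : i' - (i + 1) = i' - i - 1 := by ring
    rw [hrw, ← pow_succ']
    by_cases hc : j' < j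
    · simp [hc, Fin.ne_of_lt hc]
    · have hcc : j' = j := Fin.ext (by have := j'.isLt; omega)
      simp only [hcc, lt_irrefl, if_neg, not_false_iff, Nat.cast_zero, sub_zero, add_zero]
      rw [pval f p (i' - i)]
      by_cases hii : i' = i
      · simp [hii, sub_self]
      · simp [sub_eq_zero, hii]

lemma knonneg (p e f : ℕ) [NeZero f] (hp : (2 : ℤ) ≤ p) (k : Idx e f → ℤ)
    (hk : k ∈ XiMin p e f) (σ : Idx e f) : 0 ≤ k σ := by
  obtain ⟨σ0, -, hσ0⟩ := Finset.exists_min_image (Finset.univ : Finset (Idx e f)) k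
    ⟨σ, Finset.mem_univ σ⟩
  have hmin : ∀ τ, k σ0 ≤ k τ := fun τ => hσ0 τ (Finset.mem_univ τ)
  by_contra hneg
  push_neg at hneg
  have hm : k σ0 < 0 := lt_of_le_of_lt (hmin σ) hneg
  have main : ∀ n : ℕ, ∀ i : ZMod f, ∀ j : Fin e, (j : ℕ) = n → ¬ (k (i, j) ≤ k σ0) := by
    intro n
    induction n with
    | zero =>
      intro i j hj hle
      have h1 := hk (i, j)
      rw [nu] at h1
      simp only [hj, if_pos rfl, if_true] at h1
      have heq : k (i, j) = k σ0 := le_antisymm hle (hmin _)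
      have h2 : (p : ℤ) * k (i, j) < k σ0 := by nlinarith
      have h3 := hmin (phiInv e f (i, j))
      linarith
    | succ n ih =>
      intro i j hj hle
      have h1 := hk (i, j)
      rw [nu] at h1
      simp only [hj, Nat.succ_ne_zero, if_neg, not_false_iff, one_mul] at h1
      have hlt : n < e := by have := j.isLt; omega
      have hInv : phiInv e f (i, j) = (i, (⟨n, hlt⟩ : Fin e)) := by
        simp only [phiInv, hj, Nat.succ_ne_zero, if_neg, not_false_iff]
        exact Prod.ext rfl (Fin.ext (by simp))
      rw [hInv] at h1
      exact ih i ⟨n, hlt⟩ rfl (le_trans h1 hle)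
  exact main (σ0.2 : ℕ) σ0.1 σ0.2 rfl (by rw [Prod.mk.eta])

/-- If `k ∈ Ξ_min`, then there exist non-negative integers `(r_σ)_{σ∈I}` with
`(p^f − 1)·k = Σ_{σ∈I} r_σ·h_σ`: the minimal cone lies in the non-negative
rational cone spanned by the partial Hasse invariant weight vectors. -/
theorem xiMin_mem_hasse_cone (p e f : ℕ) (hp : p.Prime) (he : 0 < e) [NeZero f]
    (k : Idx e f → ℤ) (hk : k ∈ XiMin p e f) :
    ∃ r : Idx e f → ℕ,
      ∀ ρ : Idx e f, ((p : ℤ) ^ f - 1) * k ρ = ∑ σ : Idx e f, (r σ : ℤ) * hvec p e f σ ρ := by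
  have hp2 : (2 : ℤ) ≤ p := by exact_mod_cast hp.two_le
  have hk0 : ∀ σ, 0 ≤ k σ := knonneg p e f hp2 k hk
  set S : Idx e f → ℤ := fun ρ => ∑ τ : Idx e f, cfn p e f ρ τ * k τ with hS
  have hSnn : ∀ ρ, 0 ≤ S ρ := fun ρ => Finset.sum_nonneg fun τ _ =>
    mul_nonneg (pow_nonneg (by positivity) _) (hk0 τ)
  refine ⟨fun ρ => (S ρ).toNat, ?_⟩
  intro ρ
  have hcast : ∀ ρ, ((S ρ).toNat : ℤ) = S ρ := fun ρ => Int.toNat_of_nonneg (hSnn ρ)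
  have hterm : ∀ σ : Idx e f, ((S σ).toNat : ℤ) * hvec p e f σ ρ
      = (if σ = phi e f ρ then nu p e f σ * S σ else 0) - (if σ = ρ then S σ else 0) := by
    intro σ
    rw [hcast σ, hvec]
    by_cases h1 : σ = phi e f ρ
    · have hinv : ρ = phiInv e f σ := (eq_phiInv_iff e f ρ σ).2 h1
      rw [if_pos hinv, if_pos h1]
      by_cases h2 : σ = ρ
      · rw [if_pos h2.symm, if_pos h2]; ring
      · rw [if_neg (fun hh => h2 hh.symm), if_neg h2]; ring
    · have hinv : ¬ (ρ = phiInv e f σ) := fun hh => h1 ((eq_phiInv_iff e f ρ σ).1 hh)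
      rw [if_neg hinv, if_neg h1]
      by_cases h2 : σ = ρ
      · rw [if_pos h2.symm, if_pos h2]; ring
      · rw [if_neg (fun hh => h2 hh.symm), if_neg h2]; ring
  rw [Finset.sum_congr rfl (fun σ _ => hterm σ), Finset.sum_sub_distrib,
    Finset.sum_ite_eq' Finset.univ (phi e f ρ) (fun σ => nu p e f σ * S σ),
    Finset.sum_ite_eq' Finset.univ ρ S]
  simp only [Finset.mem_univ, if_pos]
  have hstep : nu p e f (phi e f ρ) * S (phi e f ρ) - S ρ
      = ∑ τ : Idx e f, (nu p e f (phi e f ρ) * cfn p e f (phi e f ρ) τ - cfn p e f ρ τ) * k τ := by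
    rw [hS]
    simp only
    rw [Finset.mul_sum, ← Finset.sum_sub_distrib]
    exact Finset.sum_congr rfl fun τ _ => by ring
  rw [hstep]
  have hpt : ∀ τ ∈ (Finset.univ : Finset (Idx e f)),
      (nu p e f (phi e f ρ) * cfn p e f (phi e f ρ) τ - cfn p e f ρ τ) * k τ
        = (if τ = ρ then ((p : ℤ) ^ f - 1) * k τ else 0) := by
    intro τ _
    rw [key p e f ρ τ]
    by_cases h : τ = ρ <;> simp [h]
  rw [Finset.sum_congr rfl hpt, Finset.sum_ite_eq' Finset.univ ρ]
  simp
end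

section
/- A vector k ∈ ℤ^I lies in the subgroup Σ_{σ∈I} ℤ·h_σ generated by the partial Hasse invariant weight vectors if and only if Σ_{(i,j)∈I} k_{(i,j)}·p^ĩ ≡ 0 (mod p^f − 1), where ĩ ∈ {0,…,f−1} denotes the representative of i ∈ ℤ/fℤ (the condition is independent of the choice of representatives, since p^f ≡ 1 mod p^f − 1). (This identifies the lattice spanned by the h_σ with the kernel of the character-weight map λ used in the paper to show that geometric modularity of weight (k,m) depends on m only through an associated mod p character.) -/
open scoped BigOperators

namespace HasseAux

variable {e f : ℕ}

def ord (ρ : Idx e f) : ℕ := ρ.1.val * e + ρ.2.val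

def tau (f : ℕ) {e : ℕ} (he : 0 < e) (t : ℕ) : Idx e f :=
  (((t / e : ℕ) : ZMod f), ⟨t % e, Nat.mod_lt _ he⟩)

lemma ord_lt [NeZero f] (ρ : Idx e f) : ord ρ < e * f := by
  have h1 : ρ.1.val < f := ZMod.val_lt ρ.1
  have h2 : ρ.2.val < e := ρ.2.isLt
  have : (ρ.1.val + 1) * e ≤ f * e := Nat.mul_le_mul_right e h1
  have he : (ρ.1.val + 1) * e = ρ.1.val * e + e := by ring
  have hfe : f * e = e * f := Nat.mul_comm f e
  unfold ord; omega

lemma tau_ord [NeZero f] (he : 0 < e) (ρ : Idx e f) : tau f he (ord ρ) = ρ := by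
  have h2 : ρ.2.val < e := ρ.2.isLt
  have hdiv : ord ρ / e = ρ.1.val := by
    unfold ord
    rw [Nat.mul_comm, Nat.mul_add_div he, Nat.div_eq_of_lt h2, Nat.add_zero]
  have hmod : ord ρ % e = ρ.2.val := by
    unfold ord
    rw [Nat.add_comm, Nat.add_mul_mod_self_right, Nat.mod_eq_of_lt h2]
  unfold tau
  ext
  · show ((ord ρ / e : ℕ) : ZMod f) = ρ.1
    rw [hdiv]; simp [ZMod.natCast_val, ZMod.cast_id]
  · show ord ρ % e = ρ.2.val
    exact hmod

lemma ord_tau [NeZero f] (he : 0 < e) {t : ℕ} (ht : t < e * f) : ord (tau f he t) = t := by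
  have hd : t / e < f := by
    rw [Nat.div_lt_iff_lt_mul he]
    have : e * f = f * e := Nat.mul_comm e f
    omega
  unfold ord tau
  simp only
  rw [ZMod.val_natCast_of_lt hd]
  rw [Nat.mul_comm]
  exact Nat.div_add_mod t e

lemma sum_ord [NeZero f] (he : 0 < e) (g : Idx e f → ℤ) :
    ∑ σ : Idx e f, g σ = ∑ t ∈ Finset.range (e * f), g (tau f he t) := by
  refine Finset.sum_nbij' (i := fun σ => ord σ) (j := fun t => tau f he t) ?_ ?_ ?_ ?_ ?_
  · intro σ _; exact Finset.mem_range.mpr (ord_lt σ)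
  · intro t _; exact Finset.mem_univ _
  · intro σ _; exact tau_ord he σ
  · intro t ht; exact ord_tau he (Finset.mem_range.mp ht)
  · intro σ _; rw [tau_ord he σ]

lemma phiInv_phi (he : 0 < e) (ρ : Idx e f) : phiInv e f (phi e f ρ) = ρ := by
  unfold phi
  by_cases h : (ρ.2 : ℕ) + 1 < e
  · rw [dif_pos h]
    unfold phiInv
    rw [if_neg (by simp)]
    simp
  · rw [dif_neg h]
    unfold phiInv
    rw [if_pos rfl]
    have h2 : (ρ.2 : ℕ) = e - 1 := by have := ρ.2.isLt; omega
    ext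
    · show ρ.1 + 1 - 1 = ρ.1; ring
    · show e - 1 = (ρ.2 : ℕ); omega

lemma phi_phiInv (he : 0 < e) (ρ : Idx e f) : phi e f (phiInv e f ρ) = ρ := by
  unfold phiInv
  by_cases h : (ρ.2 : ℕ) = 0
  · rw [if_pos h]
    unfold phi
    rw [dif_neg (by simp only [Fin.val_mk]; omega :
      ¬ ((⟨e - 1, Nat.sub_lt (Fin.pos ρ.2) one_pos⟩ : Fin e) : ℕ) + 1 < e)]
    ext
    · show ρ.1 - 1 + 1 = ρ.1; ring
    · show (0:ℕ) = (ρ.2 : ℕ); omega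
  · rw [if_neg h]
    unfold phi
    have h2 : (ρ.2 : ℕ) - 1 + 1 < e := by have := ρ.2.isLt; omega
    rw [dif_pos h2]
    ext
    · rfl
    · show (ρ.2 : ℕ) - 1 + 1 = (ρ.2 : ℕ); omega

lemma sum_hvec (p : ℕ) [NeZero f] (he : 0 < e) (c : Idx e f → ℤ) (ρ : Idx e f) :
    ∑ σ : Idx e f, c σ * hvec p e f σ ρ
      = nu p e f (phi e f ρ) * c (phi e f ρ) - c ρ := by
  have hiff : ∀ σ : Idx e f, (ρ = phiInv e f σ) ↔ (σ = phi e f ρ) := by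
    intro σ
    constructor
    · intro h; rw [h, phi_phiInv he]
    · intro h; rw [h, phiInv_phi he]
  simp only [hvec, mul_sub]
  rw [Finset.sum_sub_distrib]
  congr 1
  · have : ∀ σ : Idx e f, c σ * (nu p e f σ * (if ρ = phiInv e f σ then 1 else 0))
        = if σ = phi e f ρ then nu p e f σ * c σ else 0 := by
      intro σ
      by_cases h : σ = phi e f ρ
      · rw [if_pos h, if_pos ((hiff σ).mpr h)]; ring
      · rw [if_neg h, if_neg (fun hh => h ((hiff σ).mp hh))]; ring
    rw [Finset.sum_congr rfl (fun σ _ => this σ)]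
    rw [Finset.sum_ite_eq' Finset.univ (phi e f ρ) (fun σ => nu p e f σ * c σ)]
    rw [if_pos (Finset.mem_univ _)]
  · simp only [mul_ite, mul_one, mul_zero]
    rw [Finset.sum_ite_eq Finset.univ ρ c]
    rw [if_pos (Finset.mem_univ _)]


lemma pow_dvd_of_modEq (p f a b : ℕ) (h : a ≡ b [MOD f]) :
    ((p:ℤ)^f - 1) ∣ (p:ℤ)^a - (p:ℤ)^b := by
  wlog hab : a ≤ b generalizing a b
  · rw [show (p:ℤ)^a - (p:ℤ)^b = -((p:ℤ)^b - (p:ℤ)^a) by ring]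
    exact dvd_neg.mpr (this b a h.symm (le_of_not_ge hab))
  obtain ⟨m, hm⟩ := (Nat.modEq_iff_dvd' hab).mp h
  have hb : b = a + f * m := by omega
  subst hb
  have h2 : (p:ℤ)^a - (p:ℤ)^(a + f*m) = -((p:ℤ)^a * (((p:ℤ)^f)^m - 1^m)) := by
    rw [pow_add, pow_mul]; ring
  rw [h2]
  exact dvd_neg.mpr (Dvd.dvd.mul_left (by simpa using sub_dvd_pow_sub_pow ((p:ℤ)^f) 1 m) _)

lemma val_cong (f : ℕ) [NeZero f] (i : ZMod f) : (i - 1).val + 1 ≡ i.val [MOD f] := by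
  rw [← ZMod.natCast_eq_natCast_iff]
  push_cast
  simp [ZMod.natCast_val, ZMod.cast_id]

lemma forward (p : ℕ) [NeZero f] (he : 0 < e) (c k : Idx e f → ℤ)
    (hc : ∀ ρ : Idx e f, k ρ = ∑ σ : Idx e f, c σ * hvec p e f σ ρ) :
    ((p:ℤ)^f - 1) ∣ ∑ σ : Idx e f, k σ * (p:ℤ)^(σ.1.val) := by
  have hstep : ∑ σ : Idx e f, k σ * (p:ℤ)^(σ.1.val)
      = ∑ σ : Idx e f, c σ *
          (nu p e f σ * (p:ℤ)^((phiInv e f σ).1.val) - (p:ℤ)^(σ.1.val)) := by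
    calc ∑ ρ : Idx e f, k ρ * (p:ℤ)^(ρ.1.val)
        = ∑ ρ : Idx e f, (∑ σ : Idx e f, c σ * hvec p e f σ ρ) * (p:ℤ)^(ρ.1.val) := by
          refine Finset.sum_congr rfl fun ρ _ => ?_; rw [← hc ρ]
      _ = ∑ σ : Idx e f, ∑ ρ : Idx e f, c σ * hvec p e f σ ρ * (p:ℤ)^(ρ.1.val) := by
          rw [Finset.sum_comm]
          exact Finset.sum_congr rfl fun ρ _ => Finset.sum_mul ..
      _ = ∑ σ : Idx e f, c σ *
          (nu p e f σ * (p:ℤ)^((phiInv e f σ).1.val) - (p:ℤ)^(σ.1.val)) := by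
          refine Finset.sum_congr rfl fun σ _ => ?_
          simp only [mul_assoc]
          rw [← Finset.mul_sum]
          congr 1
          simp only [hvec, sub_mul, mul_assoc, mul_ite, ite_mul, mul_one, mul_zero, zero_mul,
            one_mul]
          rw [Finset.sum_sub_distrib,
            Finset.sum_ite_eq' Finset.univ (phiInv e f σ) (fun ρ => nu p e f σ * (p:ℤ)^(ρ.1.val)),
            Finset.sum_ite_eq' Finset.univ σ (fun ρ => (p:ℤ)^(ρ.1.val))]
          simp
  rw [hstep]
  refine Finset.dvd_sum fun σ _ => Dvd.dvd.mul_left ?_ _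
  by_cases h : (σ.2 : ℕ) = 0
  · have h1 : phiInv e f σ = (σ.1 - 1, ⟨e - 1, Nat.sub_lt σ.2.pos one_pos⟩) := by
      unfold phiInv; rw [if_pos h]
    have h2 : nu p e f σ = (p : ℤ) := by unfold nu; rw [if_pos h]
    rw [h1, h2]
    have h3 : (p:ℤ) * (p:ℤ)^((σ.1 - 1).val) = (p:ℤ)^((σ.1 - 1).val + 1) := by
      rw [pow_succ]; ring
    show ((p:ℤ)^f - 1) ∣ (p:ℤ) * (p:ℤ)^((σ.1 - 1, (⟨e - 1, Nat.sub_lt σ.2.pos one_pos⟩ : Fin e)).1.val) - (p:ℤ)^(σ.1.val)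
    rw [show ((σ.1 - 1, (⟨e - 1, Nat.sub_lt σ.2.pos one_pos⟩ : Fin e)) : Idx e f).1 = σ.1 - 1 from rfl, h3]
    exact pow_dvd_of_modEq p f _ _ (val_cong f σ.1)
  · have h1 : phiInv e f σ = (σ.1, ⟨(σ.2 : ℕ) - 1, lt_of_le_of_lt (Nat.sub_le _ 1) σ.2.isLt⟩) := by
      unfold phiInv; rw [if_neg h]
    have h2 : nu p e f σ = 1 := by unfold nu; rw [if_neg h]
    rw [h1, h2]
    simp



noncomputable def cvec (p : ℕ) {e f : ℕ} [NeZero f] (he : 0 < e) (k : Idx e f → ℤ) (D : ℤ)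
    (ρ : Idx e f) : ℤ :=
  D * (p:ℤ)^(f - ρ.1.val) -
    ∑ s ∈ Finset.Ico (ord ρ) (e * f), k (tau f he s) * (p:ℤ)^(s / e - ρ.1.val)

lemma ord_div (he : 0 < e) (ρ : Idx e f) : ord ρ / e = ρ.1.val := by
  unfold ord
  rw [Nat.mul_comm, Nat.mul_add_div he, Nat.div_eq_of_lt ρ.2.isLt, Nat.add_zero]

lemma backward (p : ℕ) [NeZero f] (he : 0 < e) (k : Idx e f → ℤ) (D : ℤ)
    (hD : ∑ σ : Idx e f, k σ * (p:ℤ)^(σ.1.val) = ((p:ℤ)^f - 1) * D) (ρ : Idx e f) :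
    k ρ = nu p e f (phi e f ρ) * cvec p he k D (phi e f ρ) - cvec p he k D ρ := by
  set N := e * f with hN
  have hf : 0 < f := Nat.pos_of_ne_zero (NeZero.ne f)
  have hi : ρ.1.val < f := ZMod.val_lt ρ.1
  have hj : (ρ.2 : ℕ) < e := ρ.2.isLt
  have htlt : ord ρ < N := ord_lt ρ
  have htau : tau f he (ord ρ) = ρ := tau_ord he ρ
  have hdiv : ord ρ / e = ρ.1.val := ord_div he ρ
  -- split the sum at the bottom
  have hsplit : ∑ s ∈ Finset.Ico (ord ρ) N, k (tau f he s) * (p:ℤ)^(s / e - ρ.1.val)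
      = k ρ + ∑ s ∈ Finset.Ico (ord ρ + 1) N, k (tau f he s) * (p:ℤ)^(s / e - ρ.1.val) := by
    rw [Finset.sum_eq_sum_Ico_succ_bot htlt]
    rw [htau, hdiv, Nat.sub_self, pow_zero, mul_one]
  by_cases hA : (ρ.2 : ℕ) + 1 < e
  · -- Case A: φρ = (ρ.1, j+1), ν = 1
    have hphi : phi e f ρ = (ρ.1, ⟨(ρ.2 : ℕ) + 1, hA⟩) := by unfold phi; rw [dif_pos hA]
    have hnu : nu p e f (phi e f ρ) = 1 := by
      rw [hphi]; unfold nu; simp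
    have hordphi : ord (phi e f ρ) = ord ρ + 1 := by
      rw [hphi]; unfold ord; simp [Nat.add_assoc]
    rw [hnu, one_mul]
    unfold cvec
    rw [hordphi, hsplit]
    have : (phi e f ρ).1 = ρ.1 := by rw [hphi]
    rw [this]
    ring
  · -- j = e - 1 case
    have hj1 : (ρ.2 : ℕ) = e - 1 := by omega
    have hphi : phi e f ρ = (ρ.1 + 1, ⟨0, ρ.2.pos⟩) := by unfold phi; rw [dif_neg hA]
    have hnu : nu p e f (phi e f ρ) = (p : ℤ) := by
      rw [hphi]; unfold nu; simp
    have hcast : ((ρ.1.val + 1 : ℕ) : ZMod f) = ρ.1 + 1 := by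
      push_cast
      simp [ZMod.natCast_val, ZMod.cast_id]
    by_cases hB : ρ.1.val + 1 < f
    · -- Case B
      have hval : (ρ.1 + 1).val = ρ.1.val + 1 := by
        rw [← hcast, ZMod.val_natCast_of_lt hB]
      have hordphi : ord (phi e f ρ) = ord ρ + 1 := by
        rw [hphi]; unfold ord; simp only [Fin.val_mk, Nat.add_zero]
        show (ρ.1 + 1).val * e = ρ.1.val * e + (ρ.2 : ℕ) + 1
        rw [hval]; have : e ≥ 1 := he
        calc (ρ.1.val + 1) * e = ρ.1.val * e + e := by ring
        _ = ρ.1.val * e + (ρ.2 : ℕ) + 1 := by omega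
      rw [hnu]
      unfold cvec
      rw [hordphi]
      have hphi1 : (phi e f ρ).1 = ρ.1 + 1 := by rw [hphi]
      rw [hphi1, hval, hsplit]
      have hpow1 : (p:ℤ) * (D * (p:ℤ)^(f - (ρ.1.val + 1))) = D * (p:ℤ)^(f - ρ.1.val) := by
        rw [show f - ρ.1.val = (f - (ρ.1.val + 1)) + 1 by omega, pow_succ]; ring
      have hpow2 : ∀ s ∈ Finset.Ico (ord ρ + 1) N,
          (p:ℤ) * (k (tau f he s) * (p:ℤ)^(s / e - (ρ.1.val + 1)))
            = k (tau f he s) * (p:ℤ)^(s / e - ρ.1.val) := by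
        intro s hs
        rw [Finset.mem_Ico] at hs
        have hs1 : ord ρ + 1 ≤ s := hs.1
        have hse : (ρ.1.val + 1) * e ≤ s := by
          have : (ρ.1.val + 1) * e = ρ.1.val * e + e := by ring
          unfold ord at hs1; omega
        have hdivs : ρ.1.val + 1 ≤ s / e := (Nat.le_div_iff_mul_le he).mpr hse
        rw [show s / e - ρ.1.val = (s / e - (ρ.1.val + 1)) + 1 by omega, pow_succ]
        ring
      rw [mul_sub, hpow1, Finset.mul_sum, Finset.sum_congr rfl hpow2]
      ring
    · -- Case C : ρ.1.val = f - 1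
      have hival : ρ.1.val = f - 1 := by omega
      have hval0 : (ρ.1 + 1).val = 0 := by
        rw [← hcast, hival, show f - 1 + 1 = f by omega, ZMod.natCast_self, ZMod.val_zero]
      have hordphi : ord (phi e f ρ) = 0 := by
        rw [hphi]; unfold ord; simp only [Fin.val_mk, Nat.add_zero]
        show (ρ.1 + 1).val * e + 0 = 0
        rw [hval0]; ring
      have hordρ : ord ρ = N - 1 := by
        unfold ord; rw [hival, hj1, hN]
        have : e ≥ 1 := he
        have h1 : (f - 1) * e = f * e - e := by
          cases f with
          | zero => omega
          | succ n => simp [Nat.succ_sub_one, Nat.succ_mul]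
        have h2 : f * e = e * f := Nat.mul_comm f e
        have h3 : e ≤ f * e := Nat.le_mul_of_pos_left e hf
        omega
      rw [hnu]
      unfold cvec
      rw [hordphi]
      -- total sum equals (p^f - 1) * D
      have hfull : ∑ s ∈ Finset.Ico 0 N, k (tau f he s) * (p:ℤ)^(s / e - (phi e f ρ).1.val)
          = ((p:ℤ)^f - 1) * D := by
        rw [← hD, hphi]
        show ∑ s ∈ Finset.Ico 0 N, k (tau f he s) * (p:ℤ)^(s / e - (ρ.1+1).val)
          = ∑ σ : Idx e f, k σ * (p:ℤ)^(σ.1.val)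
        rw [hval0, sum_ord he (fun σ => k σ * (p:ℤ)^(σ.1.val)), ← Finset.range_eq_Ico]
        refine Finset.sum_congr rfl fun t ht => ?_
        rw [Finset.mem_range] at ht
        have hd : t / e < f := by
          rw [Nat.div_lt_iff_lt_mul he]
          have : e * f = f * e := Nat.mul_comm e f
          omega
        have hv : (tau f he t).1.val = t / e := by
          unfold tau
          exact ZMod.val_natCast_of_lt hd
        rw [hv, Nat.sub_zero]
      have hsing : Finset.Ico (ord ρ) N = {ord ρ} := by
        rw [show N = ord ρ + 1 by omega]
        exact Nat.Ico_succ_singleton _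
      have hone : ∑ s ∈ Finset.Ico (ord ρ) N, k (tau f he s) * (p:ℤ)^(s / e - ρ.1.val)
          = k ρ := by
        rw [hsing, Finset.sum_singleton, htau, hdiv, Nat.sub_self, pow_zero, mul_one]
      rw [hfull, hone]
      have hphival : (phi e f ρ).1.val = 0 := by rw [hphi]; exact hval0
      rw [hphival, hival, Nat.sub_zero, show f - (f - 1) = 1 by omega, pow_one]
      ring

end HasseAux

/-- A vector `k ∈ ℤ^I` lies in the subgroup `Σ_{σ∈I} ℤ·h_σ` generated by the partial
Hasse invariant weight vectors if and only if
`Σ_{(i,j)∈I} k_{(i,j)}·p^ĩ ≡ 0 (mod p^f − 1)`, where `ĩ ∈ {0,…,f−1}` is the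
representative of `i ∈ ℤ/fℤ`. -/
theorem mem_hasse_lattice_iff (p e f : ℕ) (hp : p.Prime) (he : 0 < e) [NeZero f]
    (k : Idx e f → ℤ) :
    (∃ c : Idx e f → ℤ, ∀ ρ : Idx e f, k ρ = ∑ σ : Idx e f, c σ * hvec p e f σ ρ) ↔
      ((p : ℤ) ^ f - 1) ∣ ∑ σ : Idx e f, k σ * (p : ℤ) ^ (σ.1.val) := by
  constructor
  · rintro ⟨c, hc⟩
    exact HasseAux.forward p he c k hc
  · rintro ⟨D, hD⟩
    refine ⟨HasseAux.cvec p he k D, fun ρ => ?_⟩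
    rw [HasseAux.sum_hvec p he]
    exact HasseAux.backward p he k D hD ρ
end

section
/- Let ℓ ≥ 0 be an integer, define δ ∈ ℤ^I by δ_{(i,j)} = j − 1, and for σ = (i,j) ∈ I set r_σ = ℓ·(e + (j−1)(p−1)) + (e(e−1) + (j−1)(j−2)(p−1))/2. Then each r_σ is a non-negative integer and Σ_{σ∈I} r_σ·h_σ = (p−1)·(ℓ·𝟙 + δ), where 𝟙 ∈ ℤ^I is the all-ones vector. (This is the explicit expression, used in the paper's construction of Galois representations, of the multiple (p−1)(ℓ·𝟙+δ) of an ample weight as a non-negative integral combination of partial Hasse invariant weights.) -/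
open scoped BigOperators

/-- The coefficient `r_σ = ℓ·(e + (j−1)(p−1)) + (e(e−1) + (j−1)(j−2)(p−1))/2`
for `σ = (i,j) ∈ I` (here the second component of `σ` is 0-indexed, so it equals
the paper's `j − 1`); the division is integer division, which is exact. -/
def rcoef (p e f ℓ : ℕ) (σ : Idx e f) : ℤ :=
  (ℓ : ℤ) * ((e : ℤ) + (σ.2 : ℤ) * ((p : ℤ) - 1)) +
    ((e : ℤ) * ((e : ℤ) - 1) + (σ.2 : ℤ) * ((σ.2 : ℤ) - 1) * ((p : ℤ) - 1)) / 2

lemma even_mul_pred (n : ℤ) : 2 ∣ n * (n - 1) := by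
  have h : n * (n - 1) = (n - 1) * ((n - 1) + 1) := by ring
  rw [h]; exact (Int.even_mul_succ_self (n - 1)).two_dvd

/-- With `δ ∈ ℤ^I` given by `δ_{(i,j)} = j − 1`, each `r_σ` is a non-negative integer
(the division by `2` in its definition being exact) and
`Σ_{σ∈I} r_σ·h_σ = (p−1)·(ℓ·𝟙 + δ)`. -/
theorem rcoef_spec (p e f ℓ : ℕ) (hp : p.Prime) (he : 0 < e) [NeZero f] :
    (∀ σ : Idx e f,
        (2 : ℤ) ∣ ((e : ℤ) * ((e : ℤ) - 1) + (σ.2 : ℤ) * ((σ.2 : ℤ) - 1) * ((p : ℤ) - 1))) ∧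
    (∀ σ : Idx e f, 0 ≤ rcoef p e f ℓ σ) ∧
    (∀ ρ : Idx e f, ∑ σ : Idx e f, rcoef p e f ℓ σ * hvec p e f σ ρ
        = ((p : ℤ) - 1) * ((ℓ : ℤ) + (ρ.2 : ℤ))) := by
  have hpge : (0 : ℤ) ≤ (p : ℤ) - 1 := by
    have := hp.two_le
    have : (2 : ℤ) ≤ (p : ℤ) := by exact_mod_cast this
    omega
  have hdvd : ∀ σ : Idx e f,
      (2 : ℤ) ∣ ((e : ℤ) * ((e : ℤ) - 1) + (σ.2 : ℤ) * ((σ.2 : ℤ) - 1) * ((p : ℤ) - 1)) :=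
    fun σ => dvd_add (even_mul_pred _) ((even_mul_pred _).mul_right _)
  refine ⟨hdvd, ?_, ?_⟩
  · intro σ
    have hj : (0 : ℤ) ≤ (σ.2 : ℤ) := by positivity
    have hjj : (0 : ℤ) ≤ (σ.2 : ℤ) * ((σ.2 : ℤ) - 1) := by
      rcases eq_or_lt_of_le hj with h | h
      · simp [← h]
      · have : (1 : ℤ) ≤ (σ.2 : ℤ) := h
        nlinarith
    have hE : (0 : ℤ) ≤ (e : ℤ) * ((e : ℤ) - 1) := by
      have : (1 : ℤ) ≤ (e : ℤ) := by exact_mod_cast he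
      nlinarith
    unfold rcoef
    have h1 : (0 : ℤ) ≤ (ℓ : ℤ) * ((e : ℤ) + (σ.2 : ℤ) * ((p : ℤ) - 1)) := by positivity
    have h2 : (0 : ℤ) ≤ ((e : ℤ) * ((e : ℤ) - 1) + (σ.2 : ℤ) * ((σ.2 : ℤ) - 1) * ((p : ℤ) - 1)) / 2 :=
      Int.ediv_nonneg (by positivity) (by norm_num)
    linarith
  · intro ρ
    have hsum : ∑ σ : Idx e f, rcoef p e f ℓ σ * hvec p e f σ ρ
        = rcoef p e f ℓ (phi e f ρ) * nu p e f (phi e f ρ) - rcoef p e f ℓ ρ := by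
      have hiff : ∀ σ : Idx e f, (ρ = phiInv e f σ) ↔ (phi e f ρ = σ) := by
        intro σ
        constructor
        · rintro rfl; exact phi_phiInv e f σ
        · rintro rfl; exact (phiInv_phi e f ρ).symm
      simp only [hvec, hiff, mul_sub, mul_ite, mul_one, mul_zero]
      rw [Finset.sum_sub_distrib]
      rw [Finset.sum_ite_eq, Finset.sum_ite_eq]
      simp [mul_comm]
    rw [hsum]
    obtain ⟨a, ha⟩ : (2 : ℤ) ∣ (e : ℤ) * ((e : ℤ) - 1) := even_mul_pred _
    obtain ⟨b, hb⟩ : (2 : ℤ) ∣ (ρ.2 : ℤ) * ((ρ.2 : ℤ) - 1) := even_mul_pred _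
    by_cases h : (ρ.2 : ℕ) + 1 < e
    · simp only [phi, dif_pos h, rcoef, nu]
      simp only [Nat.succ_ne_zero, if_false]
      have hcast : ((⟨(ρ.2 : ℕ) + 1, h⟩ : Fin e) : ℤ) = (ρ.2 : ℤ) + 1 := by push_cast; ring
      rw [hcast]
      have hd1 : ((e : ℤ) * ((e : ℤ) - 1) + ((ρ.2 : ℤ) + 1) * (((ρ.2 : ℤ) + 1) - 1) * ((p : ℤ) - 1)) / 2
          = a + (b + (ρ.2 : ℤ)) * ((p : ℤ) - 1) := by
        rw [show (e : ℤ) * ((e : ℤ) - 1) + ((ρ.2 : ℤ) + 1) * (((ρ.2 : ℤ) + 1) - 1) * ((p : ℤ) - 1)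
            = 2 * (a + (b + (ρ.2 : ℤ)) * ((p : ℤ) - 1)) by linear_combination ha + ((p : ℤ) - 1) * hb]
        exact Int.mul_ediv_cancel_left _ two_ne_zero
      have hd2 : ((e : ℤ) * ((e : ℤ) - 1) + (ρ.2 : ℤ) * ((ρ.2 : ℤ) - 1) * ((p : ℤ) - 1)) / 2
          = a + b * ((p : ℤ) - 1) := by
        rw [show (e : ℤ) * ((e : ℤ) - 1) + (ρ.2 : ℤ) * ((ρ.2 : ℤ) - 1) * ((p : ℤ) - 1)
            = 2 * (a + b * ((p : ℤ) - 1)) by linear_combination ha + ((p : ℤ) - 1) * hb]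
        exact Int.mul_ediv_cancel_left _ two_ne_zero
      rw [hd1, hd2]; ring
    · have hv : ((ρ.2 : ℕ) : ℤ) = (e : ℤ) - 1 := by
        have := ρ.2.isLt; omega
      simp only [phi, dif_neg h, rcoef, nu]
      norm_num
      obtain ⟨c, hc⟩ : (2 : ℤ) ∣ ((e : ℤ) - 1) * ((e : ℤ) - 2) := by
        have := even_mul_pred ((e : ℤ) - 1)
        convert this using 2; ring
      have hd1 : (e : ℤ) * ((e : ℤ) - 1) / 2 = a := by
        rw [ha]; exact Int.mul_ediv_cancel_left _ two_ne_zero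
      have hd2 : ((e : ℤ) * ((e : ℤ) - 1) + (ρ.2 : ℤ) * ((ρ.2 : ℤ) - 1) * ((p : ℤ) - 1)) / 2
          = a + c * ((p : ℤ) - 1) := by
        rw [show (e : ℤ) * ((e : ℤ) - 1) + (ρ.2 : ℤ) * ((ρ.2 : ℤ) - 1) * ((p : ℤ) - 1)
            = 2 * (a + c * ((p : ℤ) - 1)) by linear_combination ha + ((p : ℤ) - 1) * hc
              + ((p : ℤ) - 1) * ((ρ.2 : ℤ) + (e : ℤ) - 2) * hv]
        exact Int.mul_ediv_cancel_left _ two_ne_zero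
      rw [hd1, hd2]
      have key : 2 * a = 2 * c + 2 * ((e : ℤ) - 1) := by linear_combination -ha + hc
      have ha' : a = c + ((e : ℤ) - 1) := by omega
      rw [ha', hv]; ring
end

section
/- Let p ≥ 3 be a prime, let a₁, a₂ ≥ 0 be integers, and set k₁ = p + a₁ − a₂ and k₂ = p + 1 − p·a₁ + a₂ (i.e. (k₁,k₂) = (p, p+1) − a₁·h₁ − a₂·h₂). Assume 0 < k₁, k₁ ≤ k₂, and k₂ ≤ p·k₁. Then: (i) if a₂ ≥ p + 1, then a₁ = 2, a₂ = p + 1 and (k₁,k₂) = (1,2); (ii) if a₂ ≤ p and p divides k₂, then a₁ = 1, a₂ = p − 1 and (k₁,k₂) = (2,p). (This is the elementary Diophantine step in the paper's proof of partial weight (1,2) modularity for a ramified quadratic field.) -/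
/-- Let `p ≥ 3` be a prime, `a₁, a₂ ≥ 0` integers, and set `k₁ = p + a₁ − a₂`,
`k₂ = p + 1 − p·a₁ + a₂` (so `(k₁,k₂) = (p,p+1) − a₁·h₁ − a₂·h₂`).  Assume
`0 < k₁`, `k₁ ≤ k₂` and `k₂ ≤ p·k₁`.  Then: (i) if `a₂ ≥ p + 1`, then `a₁ = 2`,
`a₂ = p + 1` and `(k₁,k₂) = (1,2)`; (ii) if `a₂ ≤ p` and `p ∣ k₂`, then `a₁ = 1`,
`a₂ = p − 1` and `(k₁,k₂) = (2,p)`. -/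
theorem ramified_quadratic_weight_descent (p : ℕ) (hp : p.Prime) (hp3 : 3 ≤ p)
    (a₁ a₂ k₁ k₂ : ℤ) (ha₁ : 0 ≤ a₁) (ha₂ : 0 ≤ a₂)
    (hk₁ : k₁ = (p : ℤ) + a₁ - a₂) (hk₂ : k₂ = (p : ℤ) + 1 - (p : ℤ) * a₁ + a₂)
    (h0 : 0 < k₁) (h12 : k₁ ≤ k₂) (h2p : k₂ ≤ (p : ℤ) * k₁) :
    ((p : ℤ) + 1 ≤ a₂ → a₁ = 2 ∧ a₂ = (p : ℤ) + 1 ∧ k₁ = 1 ∧ k₂ = 2) ∧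
    (a₂ ≤ (p : ℤ) ∧ (p : ℤ) ∣ k₂ → a₁ = 1 ∧ a₂ = (p : ℤ) - 1 ∧ k₁ = 2 ∧ k₂ = (p : ℤ)) := by
  have hP : (3 : ℤ) ≤ (p : ℤ) := by exact_mod_cast hp3
  subst hk₁ hk₂
  constructor
  · intro hbig
    -- a₁ ≤ 2
    have hle : a₁ ≤ 2 := by
      by_contra h
      push_neg at h
      nlinarith
    -- a₁ ≥ 2
    have hge : 2 ≤ a₁ := by
      by_contra h
      push_neg at h
      nlinarith
    have ha : a₁ = 2 := le_antisymm hle hge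
    subst ha
    have ha2 : a₂ = (p : ℤ) + 1 := by linarith
    subst ha2
    refine ⟨rfl, rfl, by ring, by ring⟩
  · rintro ⟨hsm, hdvd⟩
    -- p ∣ 1 + a₂
    have hd2 : (p : ℤ) ∣ 1 + a₂ := by
      have : (1 : ℤ) + a₂ = ((p : ℤ) + 1 - (p : ℤ) * a₁ + a₂) - (p : ℤ) + (p : ℤ) * a₁ := by
        ring
      rw [this]
      exact dvd_add (dvd_sub hdvd (dvd_refl _)) (dvd_mul_right _ _)
    obtain ⟨m, hm⟩ := hd2
    have hm1 : m = 1 := by nlinarith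
    subst hm1
    have ha2 : a₂ = (p : ℤ) - 1 := by linarith
    subst ha2
    have hle : a₁ ≤ 1 := by
      by_contra h
      push_neg at h
      nlinarith
    have hge : 1 ≤ a₁ := by
      by_contra h
      push_neg at h
      nlinarith
    have ha : a₁ = 1 := le_antisymm hle hge
    subst ha
    refine ⟨rfl, rfl, by ring, by ring⟩
end

section
/- Let 𝒪 be a discrete valuation ring, let A be a commutative 𝒪-algebra, and let M be a nonzero A-module which, as an 𝒪-module (via the structure map 𝒪 → A), is finitely generated and torsion-free. Then for every prime ideal 𝔪 of A containing the annihilator Ann_A(M), there exists a prime ideal 𝔭 of A with 𝔭 ⊆ 𝔪, Ann_A(M) ⊆ 𝔭 (so 𝔭 lies in the support of M), and 𝔭 ∩ 𝒪 = (0). (This is the Deligne–Serre style lifting mechanism used repeatedly in the paper to lift systems of mod p Hecke eigenvalues occurring in a torsion-free module over a Hecke algebra to characteristic-zero systems of eigenvalues.) -/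
/-- Deligne–Serre lifting mechanism.  Let `𝒪` be a discrete valuation ring, `A` a
commutative `𝒪`-algebra, and `M` a nonzero `A`-module which, as an `𝒪`-module (via
the structure map `𝒪 → A`), is finitely generated and torsion-free.  Then for every
prime ideal `𝔪` of `A` containing `Ann_A(M)`, there is a prime ideal `𝔭 ⊆ 𝔪` of `A`
with `Ann_A(M) ⊆ 𝔭` (so `𝔭` lies in the support of `M`) and `𝔭 ∩ 𝒪 = (0)`. -/
theorem exists_char_zero_prime_in_support
    (𝒪 A M : Type*) [CommRing 𝒪] [IsDomain 𝒪] [IsDiscreteValuationRing 𝒪]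
    [CommRing A] [Algebra 𝒪 A]
    [AddCommGroup M] [Module A M] [Module 𝒪 M] [IsScalarTower 𝒪 A M]
    [Nontrivial M] [Module.Finite 𝒪 M] [NoZeroSMulDivisors 𝒪 M]
    (𝔪 : Ideal A) (h𝔪 : 𝔪.IsPrime) (hann : Module.annihilator A M ≤ 𝔪) :
    ∃ 𝔭 : Ideal A, 𝔭.IsPrime ∧ 𝔭 ≤ 𝔪 ∧ Module.annihilator A M ≤ 𝔭 ∧
      Ideal.comap (algebraMap 𝒪 A) 𝔭 = ⊥ := by
  -- the multiplicative set of products `y * φ r` with `y ∉ 𝔪` and `r ≠ 0`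
  set S : Submonoid A :=
    { carrier := {a | ∃ y ∉ 𝔪, ∃ r : 𝒪, r ≠ 0 ∧ a = y * algebraMap 𝒪 A r}
      one_mem' := ⟨1, h𝔪.1 ∘ (Ideal.eq_top_iff_one 𝔪).mpr, 1, one_ne_zero, by simp⟩
      mul_mem' := by
        rintro a b ⟨y, hy, r, hr, rfl⟩ ⟨y', hy', r', hr', rfl⟩
        exact ⟨y * y', fun h => ((h𝔪.mem_or_mem h).elim hy hy'),
          r * r', mul_ne_zero hr hr', by rw [map_mul]; ring⟩ } with hS
  -- the annihilator is disjoint from `S` by torsion-freeness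
  have hdisj : Disjoint (Module.annihilator A M : Set A) (S : Set A) := by
    rw [Set.disjoint_left]
    rintro a ha ⟨y, hy, r, hr, rfl⟩
    apply hy
    apply hann
    rw [SetLike.mem_coe] at ha
    rw [Module.mem_annihilator] at ha ⊢
    intro m
    have h1 : r • (y • m) = 0 := by
      rw [← algebraMap_smul A r (y • m), ← mul_smul, mul_comm]
      exact ha m
    exact (smul_eq_zero.mp h1).resolve_left hr
  obtain ⟨𝔭, h𝔭, hle, hdisj'⟩ := Ideal.exists_le_prime_disjoint _ S hdisj
  rw [Set.disjoint_left] at hdisj'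
  refine ⟨𝔭, h𝔭, fun a ha => ?_, hle, ?_⟩
  · by_contra ham
    exact hdisj' ha ⟨a, ham, 1, one_ne_zero, by simp⟩
  · refine eq_bot_iff.mpr fun r hr => ?_
    by_contra hr0
    exact hdisj' hr ⟨1, h𝔪.1 ∘ (Ideal.eq_top_iff_one 𝔪).mpr, r, hr0, (one_mul _).symm⟩
end
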